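/- Let a ≥ k ≥ 1 and n ≥ a be natural numbers. The number of ways to choose and linearly arrange a out of n labelled points, and then partition the arrangement into k nonempty consecutive blocks, is C(n,a)·a!·C(a−1, k−1). Consequently, ∑_{a=k}^{n} C(n,a)·a!·C(a−1,k−1) ≤ (e^{1/2}/2)·n!·2^n for all n ≥ k ≥ 1. -/

import Mathlib

open Finset

lemma choose_le_two_pow' (m j : ℕ) : m.choose j ≤ 2 ^ m := by
  rcases le_or_gt j m with h | h
  · calc m.choose j ≤ ∑ i ∈ range (m+1), m.choose i :=
        Finset.single_le_sum (fun i _ => Nat.zero_le _) (mem_range.2 (by omega))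
      _ = 2 ^ m := Nat.sum_range_choose m
  · simp [Nat.choose_eq_zero_of_lt h]

/-- The number of ways to choose and linearly arrange `a` out of `n` labelled
points (an injection `Fin a ↪ Fin n`) together with a partition of the
arrangement into `k` nonempty consecutive blocks (a choice of `k−1` cut points
among the `a−1` gaps) is `C(n,a)·a!·C(a−1,k−1)`; consequently
`∑_{a=k}^{n} C(n,a)·a!·C(a−1,k−1) ≤ (e^{1/2}/2)·n!·2^n` for `n ≥ k ≥ 1`. -/
theorem stmt_7 (n k : ℕ) (hk : 1 ≤ k) (hkn : k ≤ n) :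
    (∀ a : ℕ, k ≤ a → a ≤ n →
      Fintype.card ((Fin a ↪ Fin n) ×
          {s : Finset (Fin (a - 1)) // s.card = k - 1})
        = Nat.choose n a * Nat.factorial a * Nat.choose (a - 1) (k - 1)) ∧
    (∑ a ∈ Finset.Icc k n,
        (Nat.choose n a * Nat.factorial a * Nat.choose (a - 1) (k - 1) : ℝ))
      ≤ (Real.exp (1/2) / 2) * (Nat.factorial n : ℝ) * 2 ^ n := by
  constructor
  · intro a hka han
    rw [Fintype.card_prod, Fintype.card_embedding_eq, Fintype.card_finset_len]
    simp only [Fintype.card_fin]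
    rw [Nat.descFactorial_eq_factorial_mul_choose]
    ring
  · -- bound each term by n! * 2^(a-1) / (n-a)!
    have hstep : ∀ a ∈ Finset.Icc k n,
        (Nat.choose n a * Nat.factorial a * Nat.choose (a - 1) (k - 1) : ℝ)
          ≤ (Nat.factorial n : ℝ) / (Nat.factorial (n - a)) * 2 ^ a / 2 := by
      intro a ha
      rw [Finset.mem_Icc] at ha
      have h1 : (Nat.choose n a * Nat.factorial a : ℝ)
          = (Nat.factorial n : ℝ) / (Nat.factorial (n - a)) := by
        rw [eq_div_iff (by positivity)]
        have := Nat.choose_mul_factorial_mul_factorial ha.2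
        push_cast [← this]
        ring
      rw [h1]
      have h2 : (Nat.choose (a - 1) (k - 1) : ℝ) ≤ 2 ^ (a - 1) := by
        exact_mod_cast Nat.cast_le.2 (choose_le_two_pow' (a-1) (k-1))
      have h3 : (2:ℝ) ^ (a - 1) = 2 ^ a / 2 := by
        have h4 : (2:ℝ) ^ a = 2 ^ (a - 1) * 2 := by
          rw [← pow_succ]; congr 1; omega
        rw [h4]; ring
      calc (Nat.factorial n : ℝ) / (Nat.factorial (n - a)) * Nat.choose (a - 1) (k - 1)
          ≤ (Nat.factorial n : ℝ) / (Nat.factorial (n - a)) * (2 ^ a / 2) := by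
            rw [← h3]; gcongr
        _ = (Nat.factorial n : ℝ) / (Nat.factorial (n - a)) * 2 ^ a / 2 := by ring
    calc (∑ a ∈ Finset.Icc k n,
        (Nat.choose n a * Nat.factorial a * Nat.choose (a - 1) (k - 1) : ℝ))
        ≤ ∑ a ∈ Finset.Icc k n,
            (Nat.factorial n : ℝ) / (Nat.factorial (n - a)) * 2 ^ a / 2 :=
          Finset.sum_le_sum hstep
      _ ≤ ∑ a ∈ Finset.range (n+1),
            (Nat.factorial n : ℝ) / (Nat.factorial (n - a)) * 2 ^ a / 2 := by
          apply Finset.sum_le_sum_of_subset_of_nonneg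
          · intro a ha; rw [Finset.mem_Icc] at ha; exact Finset.mem_range.2 (by omega)
          · intro a _ _; positivity
      _ = ∑ j ∈ Finset.range (n+1),
            (Nat.factorial n : ℝ) / (Nat.factorial j) * 2 ^ (n - j) / 2 := by
          rw [← Finset.sum_range_reflect]
          apply Finset.sum_congr rfl
          intro j hj
          rw [Finset.mem_range] at hj
          have e1 : n + 1 - 1 - j = n - j := by omega
          have e2 : n - (n - j) = j := by omega
          rw [e1, e2]
      _ ≤ (Real.exp (1/2) / 2) * (Nat.factorial n : ℝ) * 2 ^ n := by
          have key : ∀ j ∈ Finset.range (n+1),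
              (Nat.factorial n : ℝ) / (Nat.factorial j) * 2 ^ (n - j) / 2
                = ((Nat.factorial n : ℝ) * 2 ^ n / 2) * ((1/2:ℝ) ^ j / (Nat.factorial j)) := by
            intro j hj
            rw [Finset.mem_range] at hj
            have h2 : (2:ℝ) ^ (n - j) = 2 ^ n / 2 ^ j := by
              rw [eq_div_iff (by positivity), ← pow_add]; congr 1; omega
            rw [h2]
            field_simp
            rw [← mul_pow]; norm_num
          rw [Finset.sum_congr rfl key, ← Finset.mul_sum]
          have hexp := Real.sum_le_exp_of_nonneg (x := (1/2:ℝ)) (by norm_num) (n+1)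
          calc ((Nat.factorial n : ℝ) * 2 ^ n / 2) * ∑ j ∈ Finset.range (n+1), (1/2:ℝ) ^ j / (Nat.factorial j)
              ≤ ((Nat.factorial n : ℝ) * 2 ^ n / 2) * Real.exp (1/2) := by
                have hnn : (0:ℝ) ≤ (Nat.factorial n : ℝ) * 2 ^ n / 2 := by positivity
                exact mul_le_mul_of_nonneg_left hexp hnn
            _ = (Real.exp (1/2) / 2) * (Nat.factorial n : ℝ) * 2 ^ n := by ring
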